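/- Let r be a database instance over a finite domain D and IC a set of binary integrity constraints. For every answer set S of the program Π^D(r), the instance I(S) is a Dalal repair of r wrt IC. -/

import Mathlib

namespace CQA

/-! ## Ground disjunctive extended logic programs and answer sets -/

/-- Ground literals over atoms of type `α`: atoms and classically negated atoms. -/
inductive Lit (α : Type) : Type
  | pos : α → Lit α
  | neg : α → Lit α

/-- Complement of a ground literal. -/
def Lit.compl {α : Type} : Lit α → Lit α
  | .pos a => .neg a
  | .neg a => .pos a

/-- A ground disjunctive rule `⋁ head ← body, not nbody`
(`nbody` collects the literals occurring under weak negation `not`). -/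
structure Rule (α : Type) where
  head : Set (Lit α)
  body : Set (Lit α)
  nbody : Set (Lit α)

/-- A ground disjunctive extended logic program: a set of ground rules. -/
abbrev Program (α : Type) := Set (Rule α)

/-- A fact. -/
def fact {α : Type} (L : Lit α) : Rule α := ⟨{L}, ∅, ∅⟩

/-- `S` contains no complementary pair of literals. -/
def Coherent {α : Type} (S : Set (Lit α)) : Prop :=
  ∀ a : α, ¬ (Lit.pos a ∈ S ∧ Lit.neg a ∈ S)

/-- `S` satisfies every rule of `P`, reading `not L` as `L ∉ S`:
whenever all body literals are in `S` and no weakly negated literal is in `S`,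
some head disjunct is in `S`. -/
def SatProg {α : Type} (S : Set (Lit α)) (P : Program α) : Prop :=
  ∀ R ∈ P, R.body ⊆ S → (∀ L ∈ R.nbody, L ∉ S) → ∃ L ∈ R.head, L ∈ S

/-- A model of a ground program: a set of ground literals without complementary
pairs satisfying every rule, with `not L` read as `L ∉ S`. -/
def IsModel {α : Type} (S : Set (Lit α)) (P : Program α) : Prop :=
  Coherent S ∧ SatProg S P

/-- The Gelfond–Lifschitz reduct of `P` with respect to `S`: delete every rule
whose body contains `not L` with `L ∈ S`, then delete all remaining `not L`
conditions. -/
def reduct {α : Type} (P : Program α) (S : Set (Lit α)) : Program α :=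
  {R' | ∃ R ∈ P, (∀ L ∈ R.nbody, L ∉ S) ∧ R' = Rule.mk R.head R.body ∅}

/-- `S` is an answer set of `P`: `S` has no complementary pair and is a minimal
model of the reduct `^S P`. -/
def AnswerSet {α : Type} (S : Set (Lit α)) (P : Program α) : Prop :=
  Coherent S ∧ SatProg S (reduct P S) ∧
    ∀ S' : Set (Lit α), S' ⊆ S → SatProg S' (reduct P S) → S' = S

/-- The intersection of all answer sets of `P`. -/
def Core {α : Type} (P : Program α) : Set (Lit α) :=
  {L | ∀ S : Set (Lit α), AnswerSet S P → L ∈ S}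

/-! ## Well-founded semantics for ground extended disjunctive programs -/

/-- The body of rule `R` is true in the partial interpretation `I`:
the body literals belong to `I` and every weakly negated literal is false
(its complement belongs to `I`). -/
def bodyTrue {α : Type} (I : Set (Lit α)) (R : Rule α) : Prop :=
  R.body ⊆ I ∧ ∀ L ∈ R.nbody, L.compl ∈ I

/-- Immediate-consequence operator `T_Π(I)`: all literals occurring in the head
of a rule whose body is true in `I` and whose remaining head disjuncts are
false in `I`. -/
def Timm {α : Type} (P : Program α) (I : Set (Lit α)) : Set (Lit α) :=
  {L | ∃ R ∈ P, L ∈ R.head ∧ bodyTrue I R ∧ ∀ L' ∈ R.head, L' ≠ L → L'.compl ∈ I}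

/-- `X` is an unfounded set of literals with respect to `I`: for every `L ∈ X`
and every rule with `L` in its head, either the body is false or defeated
(some body literal has its complement in `I` or lies in `X`, or some weakly
negated literal is in `I`), or the head is already satisfied by `I`
independently of `X`. -/
def UnfoundedSet {α : Type} (P : Program α) (I X : Set (Lit α)) : Prop :=
  ∀ L ∈ X, ∀ R ∈ P, L ∈ R.head →
    (∃ B ∈ R.body, B.compl ∈ I ∨ B ∈ X) ∨
    (∃ B ∈ R.nbody, B ∈ I) ∨
    (∃ L' ∈ R.head, L' ≠ L ∧ L' ∈ I ∧ L' ∉ X)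

/-- The greatest unfounded set of `P` with respect to `I`. -/
def GUS {α : Type} (P : Program α) (I : Set (Lit α)) : Set (Lit α) :=
  ⋃₀ {X | UnfoundedSet P I X}

/-- The well-founded operator `𝒲_Π(I) := T_Π(I) ∪ ¬.GUS_Π(I)`. -/
def WOp {α : Type} (P : Program α) (I : Set (Lit α)) : Set (Lit α) :=
  Timm P I ∪ Lit.compl '' GUS P I

/-- The well-founded interpretation `W_Π`, the least fixpoint `𝒲_Π^ω(∅)`. -/
def WFInterp {α : Type} (P : Program α) : Set (Lit α) :=
  ⋃ n : ℕ, (WOp P)^[n] ∅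

/-! ## Relational databases and binary integrity constraints -/

/-- A ground database atom `p(ā)` over predicates `Pred` and domain `D`. -/
abbrev DBAtom (Pred D : Type) := Pred × List D

/-- A database instance over the schema `(Pred, ar)` and domain `D`:
a finite set of ground atoms respecting the arities. -/
structure Instance (Pred D : Type) (ar : Pred → ℕ) where
  atoms : Set (DBAtom Pred D)
  finite : atoms.Finite
  wf : ∀ a ∈ atoms, a.2.length = ar a.1

/-- A binary integrity constraint in standard format
`∀ (⋁_i p_i(x̄_i) ∨ ⋁_i ¬q_i(ȳ_i) ∨ φ)` with `1 ≤ n + m ≤ 2`,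
where `φ` is a formula of built-in predicates with fixed extensions
(represented semantically as a predicate on variable assignments). -/
structure BIC (Pred D : Type) (ar : Pred → ℕ) where
  nvars : ℕ
  pos : List (Pred × List (Fin nvars))
  neg : List (Pred × List (Fin nvars))
  builtin : (Fin nvars → D) → Prop
  wfpos : ∀ a ∈ pos, a.2.length = ar a.1
  wfneg : ∀ a ∈ neg, a.2.length = ar a.1
  lb : 1 ≤ pos.length + neg.length
  ub : pos.length + neg.length ≤ 2

variable {Pred D : Type} {ar : Pred → ℕ}

/-- The ground clause of constraint `c` under the assignment `ν` holds in the
set of atoms `A`. -/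
def BIC.holdsAt (c : BIC Pred D ar) (A : Set (DBAtom Pred D)) (ν : Fin c.nvars → D) : Prop :=
  (∃ a ∈ c.pos, (a.1, a.2.map ν) ∈ A) ∨ (∃ a ∈ c.neg, (a.1, a.2.map ν) ∉ A) ∨ c.builtin ν

/-- The set of atoms `A` (as a Herbrand structure over `D`) satisfies all
constraints in `IC`. -/
def SatSet (A : Set (DBAtom Pred D)) (IC : Set (BIC Pred D ar)) : Prop :=
  ∀ c ∈ IC, ∀ ν : Fin c.nvars → D, c.holdsAt A ν

/-- The instance `r` satisfies the set of integrity constraints `IC`. -/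
def SatIC (r : Instance Pred D ar) (IC : Set (BIC Pred D ar)) : Prop :=
  SatSet r.atoms IC

/-- `r'` is a repair of `r` w.r.t. `IC`: `r' ⊨ IC` and the symmetric difference
`Δ(r,r')` is minimal under set inclusion in `{Δ(r,r*) | r* ⊨ IC}`. -/
def IsRepair (r r' : Instance Pred D ar) (IC : Set (BIC Pred D ar)) : Prop :=
  SatIC r' IC ∧
    ∀ r'' : Instance Pred D ar, SatIC r'' IC →
      symmDiff r.atoms r''.atoms ⊆ symmDiff r.atoms r'.atoms →
      symmDiff r.atoms r''.atoms = symmDiff r.atoms r'.atoms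

/-- `r'` is a Dalal repair of `r` w.r.t. `IC`: `r' ⊨ IC` and the cardinality
`|Δ(r,r')|` is minimal in `{|Δ(r,r*)| : r* ⊨ IC}`. -/
def IsDalalRepair (r r' : Instance Pred D ar) (IC : Set (BIC Pred D ar)) : Prop :=
  SatIC r' IC ∧
    ∀ r'' : Instance Pred D ar, SatIC r'' IC →
      (symmDiff r.atoms r'.atoms).ncard ≤ (symmDiff r.atoms r''.atoms).ncard

/-! ## The change program and the repair program -/

/-- Atoms of the repair programs: database atoms `p(ā)`, primed atoms `p′(ā)`,
and domain atoms `dom(a)` (playing the role of `act_r(a)` when grounding over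
the active domain). -/
inductive GAtom (Pred D : Type) : Type
  | base : Pred → List D → GAtom Pred D
  | primed : Pred → List D → GAtom Pred D
  | dom : D → GAtom Pred D

/-- Variables occurring in a list of atoms with variable tuples. -/
def varsIn {n : ℕ} (l : List (Pred × List (Fin n))) : Set (Fin n) :=
  {v | ∃ a ∈ l, v ∈ a.2}

/-- The domain atoms `dom(ν v)` for the variables `v ∈ V`. -/
def domBody {n : ℕ} (ν : Fin n → D) (V : Set (Fin n)) : Set (Lit (GAtom Pred D)) :=
  {L | ∃ v ∈ V, L = Lit.pos (GAtom.dom (ν v))}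

/-- The positive primed head disjuncts `p′_i(ν x̄_i)` of constraint `c`. -/
def posHead (c : BIC Pred D ar) (ν : Fin c.nvars → D) : Set (Lit (GAtom Pred D)) :=
  {L | ∃ a ∈ c.pos, L = Lit.pos (GAtom.primed a.1 (a.2.map ν))}

/-- The negative primed head disjuncts `¬q′_i(ν ȳ_i)` of constraint `c`. -/
def negHead (c : BIC Pred D ar) (ν : Fin c.nvars → D) : Set (Lit (GAtom Pred D)) :=
  {L | ∃ a ∈ c.neg, L = Lit.neg (GAtom.primed a.1 (a.2.map ν))}

/-- The triggering rule of constraint `c` at assignment `ν`: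
`⋁ p′_i ∨ ⋁ ¬q′_i ← dom(x̄_1,…,x̄_n), not p_1,…,not p_n, q_1,…,q_m, not φ`
(the condition `not φ` on the built-in formula, which has a fixed extension,
is accounted for by including the ground rule only when `φ(ν)` is false). -/
def trigRule (c : BIC Pred D ar) (ν : Fin c.nvars → D) : Rule (GAtom Pred D) where
  head := posHead c ν ∪ negHead c ν
  body := domBody ν (varsIn c.pos) ∪
    {L | ∃ a ∈ c.neg, L = Lit.pos (GAtom.base a.1 (a.2.map ν))}
  nbody := {L | ∃ a ∈ c.pos, L = Lit.pos (GAtom.base a.1 (a.2.map ν))}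

/-- The stabilizing rule of `c` at `ν` for the `j`-th positive database literal:
remove `p′_j` from the disjunctive head and add its complement `¬p′_j` to the
body, together with the `dom` atoms and `not φ`. -/
def stabPosRule (c : BIC Pred D ar) (ν : Fin c.nvars → D) (j : Fin c.pos.length) :
    Rule (GAtom Pred D) where
  head := {L | ∃ i : Fin c.pos.length, i ≠ j ∧
      L = Lit.pos (GAtom.primed (c.pos.get i).1 ((c.pos.get i).2.map ν))} ∪ negHead c ν
  body := domBody ν (varsIn c.pos ∪ varsIn c.neg) ∪
    {Lit.neg (GAtom.primed (c.pos.get j).1 ((c.pos.get j).2.map ν))}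
  nbody := ∅

/-- The stabilizing rule of `c` at `ν` for the `j`-th negative database literal:
remove `¬q′_j` from the disjunctive head and add its complement `q′_j` to the
body, together with the `dom` atoms and `not φ`. -/
def stabNegRule (c : BIC Pred D ar) (ν : Fin c.nvars → D) (j : Fin c.neg.length) :
    Rule (GAtom Pred D) where
  head := posHead c ν ∪ {L | ∃ i : Fin c.neg.length, i ≠ j ∧
      L = Lit.neg (GAtom.primed (c.neg.get i).1 ((c.neg.get i).2.map ν))}
  body := domBody ν (varsIn c.pos ∪ varsIn c.neg) ∪
    {Lit.pos (GAtom.primed (c.neg.get j).1 ((c.neg.get j).2.map ν))}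
  nbody := ∅

/-- The change program `Π_Δ(r)` grounded over the subdomain `A ⊆ D`:
facts for `r` and for the (active) domain, triggering rules and stabilizing
rules for all constraints in `IC`. -/
def changeProgOn (r : Instance Pred D ar) (IC : Set (BIC Pred D ar)) (A : Set D) :
    Program (GAtom Pred D) :=
  {R | ∃ a ∈ r.atoms, R = fact (Lit.pos (GAtom.base a.1 a.2))} ∪
  {R | ∃ d ∈ A, R = fact (Lit.pos (GAtom.dom d))} ∪
  {R | ∃ c ∈ IC, ∃ ν : Fin c.nvars → D, (∀ i, ν i ∈ A) ∧ ¬ c.builtin ν ∧ R = trigRule c ν} ∪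
  {R | ∃ c ∈ IC, ∃ ν : Fin c.nvars → D, (∀ i, ν i ∈ A) ∧ ¬ c.builtin ν ∧
        ∃ j : Fin c.pos.length, R = stabPosRule c ν j} ∪
  {R | ∃ c ∈ IC, ∃ ν : Fin c.nvars → D, (∀ i, ν i ∈ A) ∧ ¬ c.builtin ν ∧
        ∃ j : Fin c.neg.length, R = stabNegRule c ν j}

/-- The change program `Π_Δ(r)` grounded over the full domain `D`. -/
def changeProg (r : Instance Pred D ar) (IC : Set (BIC Pred D ar)) :
    Program (GAtom Pred D) :=
  changeProgOn r IC Set.univ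

/-- The persistence rules `p′(x̄) ← p(x̄), not ¬p′(x̄)` and
`¬p′(x̄) ← dom(x̄), not p(x̄), not p′(x̄)`, grounded over `A ⊆ D`. -/
def persistProgOn (ar : Pred → ℕ) (A : Set D) : Program (GAtom Pred D) :=
  {R | ∃ (p : Pred) (t : List D), t.length = ar p ∧ (∀ d ∈ t, d ∈ A) ∧
    (R = Rule.mk {Lit.pos (GAtom.primed p t)} {Lit.pos (GAtom.base p t)}
          {Lit.neg (GAtom.primed p t)} ∨
     R = Rule.mk {Lit.neg (GAtom.primed p t)} {L | ∃ d ∈ t, L = Lit.pos (GAtom.dom d)}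
          {Lit.pos (GAtom.base p t), Lit.pos (GAtom.primed p t)})}

/-- The repair program `Π(r)` grounded over `A ⊆ D`: the change program plus
the persistence rules. -/
def repairProgOn (r : Instance Pred D ar) (IC : Set (BIC Pred D ar)) (A : Set D) :
    Program (GAtom Pred D) :=
  changeProgOn r IC A ∪ persistProgOn ar A

/-- The repair program `Π(r)` grounded over the full domain `D`. -/
def repairProg (r : Instance Pred D ar) (IC : Set (BIC Pred D ar)) :
    Program (GAtom Pred D) :=
  repairProgOn r IC Set.univ

/-- The database instance corresponding to a set of ground literals:
`I(S) = {p(ā) | p′(ā) ∈ S} ∪ {p(ā) | p(ā) ∈ S and ¬p′(ā) ∉ S}`. -/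
def IofS (S : Set (Lit (GAtom Pred D))) : Set (DBAtom Pred D) :=
  {a | Lit.pos (GAtom.primed a.1 a.2) ∈ S} ∪
  {a | Lit.pos (GAtom.base a.1 a.2) ∈ S ∧ Lit.neg (GAtom.primed a.1 a.2) ∉ S}

/-- The database instance `{p(ā) | p′(ā) ∈ S}` extracted from the primed
atoms of `S`. -/
def primedAtoms (S : Set (Lit (GAtom Pred D))) : Set (DBAtom Pred D) :=
  {a | Lit.pos (GAtom.primed a.1 a.2) ∈ S}

/-- `S(r,r′) = {p(ā) | p(ā) ∈ r} ∪ {p′(ā) | p(ā) ∈ r′} ∪ {¬p′(ā) | p(ā) ∉ r′}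
∪ {dom(a) | a ∈ D}`. -/
def SofRR (r r' : Instance Pred D ar) : Set (Lit (GAtom Pred D)) :=
  {L | ∃ a ∈ r.atoms, L = Lit.pos (GAtom.base a.1 a.2)} ∪
  {L | ∃ a ∈ r'.atoms, L = Lit.pos (GAtom.primed a.1 a.2)} ∪
  {L | ∃ a : DBAtom Pred D, a.2.length = ar a.1 ∧ a ∉ r'.atoms ∧
        L = Lit.neg (GAtom.primed a.1 a.2)} ∪
  {L | ∃ d : D, L = Lit.pos (GAtom.dom d)}

/-! ## Active domain and domain independence -/

/-- The active domain of `r`: the constants occurring in `r`. -/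
def ActDom (r : Instance Pred D ar) : Set D :=
  {d | ∃ a ∈ r.atoms, d ∈ a.2}

/-- Satisfaction of `IC` in `A` relativized to the subdomain `Dm`. -/
def SatSetOn (A : Set (DBAtom Pred D)) (IC : Set (BIC Pred D ar)) (Dm : Set D) : Prop :=
  ∀ c ∈ IC, ∀ ν : Fin c.nvars → D, (∀ i, ν i ∈ Dm) → c.holdsAt A ν

/-- `IC` is domain independent: for every instance, satisfaction of the
constraints depends only on the active domain. -/
def DomIndep (IC : Set (BIC Pred D ar)) : Prop :=
  ∀ (r : Instance Pred D ar) (A : Set D), ActDom r ⊆ A →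
    (SatSetOn r.atoms IC A ↔ SatSet r.atoms IC)

/-! ## Weak constraints and Dalal answer sets -/

/-- The violated ground instances of the weak constraints
`⇐ p′(x̄), not p(x̄)` and `⇐ ¬p′(x̄), p(x̄)` in `S` (a ground weak constraint
is violated by `S` iff all its body conditions hold in `S`). -/
def weakViol (ar : Pred → ℕ) (S : Set (Lit (GAtom Pred D))) :
    Set (Bool × DBAtom Pred D) :=
  {x | x.2.2.length = ar x.2.1 ∧
    ((x.1 = true ∧ Lit.pos (GAtom.primed x.2.1 x.2.2) ∈ S ∧
        Lit.pos (GAtom.base x.2.1 x.2.2) ∉ S) ∨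
     (x.1 = false ∧ Lit.neg (GAtom.primed x.2.1 x.2.2) ∈ S ∧
        Lit.pos (GAtom.base x.2.1 x.2.2) ∈ S))}

/-- Answer sets of the program `Π^D(r)` (the change program plus the weak
constraints): answer sets of `Π_Δ(r)` minimizing the number of violated
ground weak constraints. -/
def DalalAnswerSet (r : Instance Pred D ar) (IC : Set (BIC Pred D ar))
    (S : Set (Lit (GAtom Pred D))) : Prop :=
  AnswerSet S (changeProg r IC) ∧
    ∀ S' : Set (Lit (GAtom Pred D)), AnswerSet S' (changeProg r IC) →
      (weakViol ar S).ncard ≤ (weakViol ar S').ncard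

/-! ## Functional dependencies and unary constraints -/

/-- A unary integrity constraint: a BIC with at most one database literal. -/
def BIC.IsUnary (c : BIC Pred D ar) : Prop := c.pos.length + c.neg.length ≤ 1

/-- A functional dependency: a BIC of the form
`∀ (¬p(x̄,ȳ) ∨ ¬p(x̄,z̄) ∨ ȳ = z̄)` with pairwise distinct variables. -/
def BIC.IsFD (c : BIC Pred D ar) : Prop :=
  c.pos = [] ∧ ∃ (p : Pred) (xs ys zs : List (Fin c.nvars)),
    ys.length = zs.length ∧ (xs ++ ys ++ zs).Nodup ∧
    c.neg = [(p, xs ++ ys), (p, xs ++ zs)] ∧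
    ∀ ν : Fin c.nvars → D, (c.builtin ν ↔ ys.map ν = zs.map ν)

section Proof10

variable {Pred D : Type} {ar : Pred → ℕ}

private lemma fire' {P : Program (GAtom Pred D)} {T U : Set (Lit (GAtom Pred D))}
    (h : SatProg T (reduct P U)) {R : Rule (GAtom Pred D)} (hR : R ∈ P)
    (hn : ∀ L ∈ R.nbody, L ∉ U) (hb : R.body ⊆ T) : ∃ L ∈ R.head, L ∈ T :=
  h ⟨R.head, R.body, ∅⟩ ⟨R, hR, hn, rfl⟩ hb (by intro L hL; exact absurd hL (Set.notMem_empty L))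

private lemma mem_cp {r : Instance Pred D ar} {IC : Set (BIC Pred D ar)} {R : Rule (GAtom Pred D)} :
    R ∈ changeProg r IC ↔
      (∃ a ∈ r.atoms, R = fact (Lit.pos (GAtom.base a.1 a.2))) ∨
      (∃ d : D, R = fact (Lit.pos (GAtom.dom d))) ∨
      (∃ c ∈ IC, ∃ ν : Fin c.nvars → D, ¬ c.builtin ν ∧ R = trigRule c ν) ∨
      (∃ c ∈ IC, ∃ ν : Fin c.nvars → D, ¬ c.builtin ν ∧
        ∃ j : Fin c.pos.length, R = stabPosRule c ν j) ∨
      (∃ c ∈ IC, ∃ ν : Fin c.nvars → D, ¬ c.builtin ν ∧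
        ∃ j : Fin c.neg.length, R = stabNegRule c ν j) := by
  simp only [changeProg, changeProgOn, Set.mem_union, Set.mem_setOf_eq, Set.mem_univ,
    true_and, implies_true]
  constructor
  · rintro ((((h | h) | h) | h) | h)
    exacts [Or.inl h, Or.inr (Or.inl h), Or.inr (Or.inr (Or.inl h)),
      Or.inr (Or.inr (Or.inr (Or.inl h))), Or.inr (Or.inr (Or.inr (Or.inr h)))]
  · rintro (h | h | h | h | h)
    exacts [Or.inl (Or.inl (Or.inl (Or.inl h))), Or.inl (Or.inl (Or.inl (Or.inr h))),
      Or.inl (Or.inl (Or.inr h)), Or.inl (Or.inr h), Or.inr h]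

private lemma base_of_r' {r : Instance Pred D ar} {IC : Set (BIC Pred D ar)}
    {T U : Set (Lit (GAtom Pred D))} (hsat : SatProg T (reduct (changeProg r IC) U))
    {a : DBAtom Pred D} (ha : a ∈ r.atoms) : Lit.pos (GAtom.base a.1 a.2) ∈ T := by
  obtain ⟨L, hL, hLS⟩ := fire' hsat (mem_cp.mpr (Or.inl ⟨a, ha, rfl⟩))
    (by intro L hL; exact absurd hL (Set.notMem_empty L)) (Set.empty_subset T)
  simp only [fact, Set.mem_singleton_iff] at hL
  exact hL ▸ hLS

private lemma dom_of_r' {r : Instance Pred D ar} {IC : Set (BIC Pred D ar)}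
    {T U : Set (Lit (GAtom Pred D))} (hsat : SatProg T (reduct (changeProg r IC) U))
    (d : D) : Lit.pos (GAtom.dom d) ∈ T := by
  obtain ⟨L, hL, hLS⟩ := fire' hsat (mem_cp.mpr (Or.inr (Or.inl ⟨d, rfl⟩)))
    (by intro L hL; exact absurd hL (Set.notMem_empty L)) (Set.empty_subset T)
  simp only [fact, Set.mem_singleton_iff] at hL
  exact hL ▸ hLS

/-- "Allowed" literals: atoms of `r`, domain atoms, well-formed primed atoms. -/
private def Good (r : Instance Pred D ar) : Lit (GAtom Pred D) → Prop
  | .pos (.base p t) => (p, t) ∈ r.atoms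
  | .pos (.primed p t) => t.length = ar p
  | .pos (.dom _) => True
  | .neg (.primed _ _) => True
  | _ => False

private lemma head_good {r : Instance Pred D ar} {IC : Set (BIC Pred D ar)}
    {R : Rule (GAtom Pred D)} (hR : R ∈ changeProg r IC) :
    ∀ L ∈ R.head, Good r L := by
  intro L hL
  rcases mem_cp.mp hR with ⟨a, ha, rfl⟩ | ⟨d, rfl⟩ | ⟨c, hc, ν, hbi, rfl⟩ |
    ⟨c, hc, ν, hbi, j, rfl⟩ | ⟨c, hc, ν, hbi, j, rfl⟩
  · simp only [fact, Set.mem_singleton_iff] at hL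
    subst hL; simpa [Good] using ha
  · simp only [fact, Set.mem_singleton_iff] at hL
    subst hL; trivial
  · rcases hL with ⟨a, ha, rfl⟩ | ⟨a, ha, rfl⟩
    · simpa [Good] using c.wfpos a ha
    · trivial
  · rcases hL with ⟨i, hij, rfl⟩ | ⟨a, ha, rfl⟩
    · simpa [Good] using c.wfpos _ (List.get_mem c.pos i)
    · trivial
  · rcases hL with ⟨a, ha, rfl⟩ | ⟨i, hij, rfl⟩
    · simpa [Good] using c.wfpos a ha
    · trivial

private lemma good_of_S {r : Instance Pred D ar} {IC : Set (BIC Pred D ar)}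
    {S : Set (Lit (GAtom Pred D))} (hA : AnswerSet S (changeProg r IC)) :
    ∀ L ∈ S, Good r L := by
  obtain ⟨hcoh, hsat, hmin⟩ := hA
  have hsub : {L | L ∈ S ∧ Good r L} ⊆ S := fun L hL => hL.1
  have hsat' : SatProg {L | L ∈ S ∧ Good r L} (reduct (changeProg r IC) S) := by
    rintro R' ⟨R, hR, hn, rfl⟩ hb -
    obtain ⟨L, hLh, hLS⟩ := fire' hsat hR hn (fun x hx => (hb hx).1)
    exact ⟨L, hLh, hLS, head_good hR L hLh⟩
  have heq := hmin _ hsub hsat'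
  intro L hL
  rw [← heq] at hL
  exact hL.2

private lemma IofS_sat {r : Instance Pred D ar} {IC : Set (BIC Pred D ar)}
    {S : Set (Lit (GAtom Pred D))} (hA : AnswerSet S (changeProg r IC)) :
    SatSet (IofS S) IC := by
  intro c hc ν
  by_contra hcon
  rw [BIC.holdsAt] at hcon
  push_neg at hcon
  obtain ⟨Hpos, Hneg, Hbi⟩ := hcon
  obtain ⟨hcoh, hsat, -⟩ := hA
  have hdom : ∀ d, Lit.pos (GAtom.dom d) ∈ S := dom_of_r' hsat
  have hP : ∀ a ∈ c.pos, Lit.pos (GAtom.primed a.1 (a.2.map ν)) ∉ S := by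
    intro a ha h
    exact Hpos a ha (Or.inl h)
  have hN : ∀ a ∈ c.neg, Lit.neg (GAtom.primed a.1 (a.2.map ν)) ∉ S := by
    intro a ha h
    rcases Hneg a ha with h1 | ⟨h1, h2⟩
    · exact hcoh _ ⟨h1, h⟩
    · exact h2 h
  have hHead : ∀ L, (L ∈ posHead c ν ∪ negHead c ν) → L ∉ S := by
    rintro L (⟨a, ha, rfl⟩ | ⟨a, ha, rfl⟩)
    · exact hP a ha
    · exact hN a ha
  by_cases hbase : ∃ a ∈ c.pos, Lit.pos (GAtom.base a.1 (a.2.map ν)) ∈ S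
  · obtain ⟨a, ha, hbS⟩ := hbase
    have hnp : Lit.neg (GAtom.primed a.1 (a.2.map ν)) ∈ S := by
      by_contra hnp
      exact Hpos a ha (Or.inr ⟨hbS, hnp⟩)
    obtain ⟨j, hj⟩ := List.mem_iff_get.mp ha
    have hmem : stabPosRule c ν j ∈ changeProg r IC :=
      mem_cp.mpr (Or.inr (Or.inr (Or.inr (Or.inl ⟨c, hc, ν, Hbi, j, rfl⟩))))
    obtain ⟨L, hLh, hLS⟩ := fire' hsat hmem
      (fun L hL => absurd hL (Set.notMem_empty L))
      (by
        rintro L (⟨v, hv, rfl⟩ | hL)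
        · exact hdom _
        · rw [Set.mem_singleton_iff] at hL
          subst hL; rw [hj]; exact hnp)
    rcases hLh with ⟨i, hij, rfl⟩ | hLh
    · exact hP _ (List.get_mem c.pos i) hLS
    · exact hHead _ (Or.inr hLh) hLS
  · by_cases hprimed : ∃ a ∈ c.neg, Lit.pos (GAtom.primed a.1 (a.2.map ν)) ∈ S
    · obtain ⟨a, ha, hpS⟩ := hprimed
      obtain ⟨j, hj⟩ := List.mem_iff_get.mp ha
      have hmem : stabNegRule c ν j ∈ changeProg r IC :=
        mem_cp.mpr (Or.inr (Or.inr (Or.inr (Or.inr ⟨c, hc, ν, Hbi, j, rfl⟩))))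
      obtain ⟨L, hLh, hLS⟩ := fire' hsat hmem
        (fun L hL => absurd hL (Set.notMem_empty L))
        (by
          rintro L (⟨v, hv, rfl⟩ | hL)
          · exact hdom _
          · rw [Set.mem_singleton_iff] at hL
            subst hL; rw [hj]; exact hpS)
      rcases hLh with hLh | ⟨i, hij, rfl⟩
      · exact hHead _ (Or.inl hLh) hLS
      · exact hN _ (List.get_mem c.neg i) hLS
    · have hmem : trigRule c ν ∈ changeProg r IC :=
        mem_cp.mpr (Or.inr (Or.inr (Or.inl ⟨c, hc, ν, Hbi, rfl⟩)))
      obtain ⟨L, hLh, hLS⟩ := fire' hsat hmem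
        (by
          rintro L ⟨a, ha, rfl⟩ h
          exact hbase ⟨a, ha, h⟩)
        (by
          rintro L (⟨v, hv, rfl⟩ | ⟨a, ha, rfl⟩)
          · exact hdom _
          · rcases Hneg a ha with h1 | ⟨h1, h2⟩
            · exact absurd ⟨a, ha, h1⟩ hprimed
            · exact h1)
      exact hHead L hLh hLS

private lemma finite_len [Finite D] (n : ℕ) : {l : List D | l.length = n}.Finite := by
  induction n with
  | zero =>
    have : {l : List D | l.length = 0} = {[]} := by
      ext l; simp [List.length_eq_zero_iff]
    rw [this]; exact Set.finite_singleton _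
  | succ n ih =>
    have : {l : List D | l.length = n + 1} =
        Set.image2 List.cons Set.univ {l : List D | l.length = n} := by
      ext l
      constructor
      · intro h
        cases l with
        | nil => simp at h
        | cons d t => exact ⟨d, Set.mem_univ d, t, by simpa using h, rfl⟩
      · rintro ⟨d, -, t, ht, rfl⟩
        simpa using ht
    rw [this]
    exact Set.Finite.image2 _ Set.finite_univ ih

private lemma finite_wf [Finite Pred] [Finite D] :
    {a : DBAtom Pred D | a.2.length = ar a.1}.Finite := by
  have : {a : DBAtom Pred D | a.2.length = ar a.1} ⊆
      ⋃ p ∈ (Set.univ : Set Pred), (fun l => (p, l)) '' {l : List D | l.length = ar p} := by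
    rintro ⟨p, l⟩ h
    exact Set.mem_biUnion (Set.mem_univ p) ⟨l, h, rfl⟩
  exact Set.Finite.subset (Set.Finite.biUnion Set.finite_univ
    (fun p _ => (finite_len (ar p)).image _)) this

private lemma SofRR_base {r r'' : Instance Pred D ar} {p : Pred} {t : List D} :
    Lit.pos (GAtom.base p t) ∈ SofRR r r'' ↔ (p, t) ∈ r.atoms := by
  constructor
  · rintro (((⟨a, ha, heq⟩ | ⟨a, ha, heq⟩) | ⟨a, ha1, ha2, heq⟩) | ⟨d, heq⟩)
    · injection heq with h1; injection h1 with h2 h3; subst h2; subst h3; exact ha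
    · exact absurd heq (by simp)
    · exact absurd heq (by simp)
    · exact absurd heq (by simp)
  · intro h
    exact Or.inl (Or.inl (Or.inl ⟨(p, t), h, rfl⟩))

private lemma SofRR_primed {r r'' : Instance Pred D ar} {p : Pred} {t : List D} :
    Lit.pos (GAtom.primed p t) ∈ SofRR r r'' ↔ (p, t) ∈ r''.atoms := by
  constructor
  · rintro (((⟨a, ha, heq⟩ | ⟨a, ha, heq⟩) | ⟨a, ha1, ha2, heq⟩) | ⟨d, heq⟩)
    · exact absurd heq (by simp)
    · injection heq with h1; injection h1 with h2 h3; subst h2; subst h3; exact ha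
    · exact absurd heq (by simp)
    · exact absurd heq (by simp)
  · intro h
    exact Or.inl (Or.inl (Or.inr ⟨(p, t), h, rfl⟩))

private lemma SofRR_nprimed {r r'' : Instance Pred D ar} {p : Pred} {t : List D} :
    Lit.neg (GAtom.primed p t) ∈ SofRR r r'' ↔ t.length = ar p ∧ (p, t) ∉ r''.atoms := by
  constructor
  · rintro (((⟨a, ha, heq⟩ | ⟨a, ha, heq⟩) | ⟨a, ha1, ha2, heq⟩) | ⟨d, heq⟩)
    · exact absurd heq (by simp)
    · exact absurd heq (by simp)
    · injection heq with h1; injection h1 with h2 h3; subst h2; subst h3; exact ⟨ha1, ha2⟩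
    · exact absurd heq (by simp)
  · rintro ⟨h1, h2⟩
    exact Or.inl (Or.inr ⟨(p, t), h1, h2, rfl⟩)

private lemma SofRR_dom {r r'' : Instance Pred D ar} {d : D} :
    Lit.pos (GAtom.dom d) ∈ SofRR r r'' :=
  Or.inr ⟨d, rfl⟩

private lemma SofRR_neg_shape {r r'' : Instance Pred D ar} {x : GAtom Pred D}
    (h : Lit.neg x ∈ SofRR r r'') : ∃ p t, x = GAtom.primed p t := by
  rcases h with (((⟨a, ha, heq⟩ | ⟨a, ha, heq⟩) | ⟨a, ha1, ha2, heq⟩) | ⟨d, heq⟩)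
  · exact absurd heq (by simp)
  · exact absurd heq (by simp)
  · injection heq with h1; exact ⟨a.1, a.2, h1⟩
  · exact absurd heq (by simp)

private lemma SofRR_coherent {r r'' : Instance Pred D ar} : Coherent (SofRR r r'') := by
  rintro x ⟨hp, hn⟩
  obtain ⟨p, t, rfl⟩ := SofRR_neg_shape hn
  exact (SofRR_nprimed.mp hn).2 (SofRR_primed.mp hp)

private lemma SofRR_finite [Finite Pred] [Finite D] {r r'' : Instance Pred D ar} :
    (SofRR r r'').Finite := by
  have h1 : {L : Lit (GAtom Pred D) | ∃ a ∈ r.atoms, L = Lit.pos (GAtom.base a.1 a.2)}.Finite := by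
    have := r.finite.image (fun a => Lit.pos (GAtom.base a.1 a.2))
    refine this.subset ?_
    rintro L ⟨a, ha, rfl⟩
    exact ⟨a, ha, rfl⟩
  have h2 : {L : Lit (GAtom Pred D) | ∃ a ∈ r''.atoms, L = Lit.pos (GAtom.primed a.1 a.2)}.Finite := by
    have := r''.finite.image (fun a => Lit.pos (GAtom.primed a.1 a.2))
    refine this.subset ?_
    rintro L ⟨a, ha, rfl⟩
    exact ⟨a, ha, rfl⟩
  have h3 : {L : Lit (GAtom Pred D) | ∃ a : DBAtom Pred D, a.2.length = ar a.1 ∧ a ∉ r''.atoms ∧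
      L = Lit.neg (GAtom.primed a.1 a.2)}.Finite := by
    have := (finite_wf (Pred := Pred) (D := D) (ar := ar)).image (fun a => Lit.neg (GAtom.primed a.1 a.2))
    refine this.subset ?_
    rintro L ⟨a, ha, _, rfl⟩
    exact ⟨a, ha, rfl⟩
  have h4 : {L : Lit (GAtom Pred D) | ∃ d : D, L = Lit.pos (GAtom.dom d)}.Finite := by
    have : Set.Finite (Set.range (fun d : D => (Lit.pos (GAtom.dom d) : Lit (GAtom Pred D)))) :=
      Set.finite_range _
    refine this.subset ?_
    rintro L ⟨d, rfl⟩
    exact ⟨d, rfl⟩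
  exact ((h1.union h2).union h3).union h4

private lemma SofRR_model {r r'' : Instance Pred D ar} {IC : Set (BIC Pred D ar)}
    (h'' : SatIC r'' IC) :
    SatProg (SofRR r r'') (reduct (changeProg r IC) (SofRR r r'')) := by
  rintro R' ⟨R, hR, hn, rfl⟩ hb -
  rcases mem_cp.mp hR with ⟨a, ha, rfl⟩ | ⟨d, rfl⟩ | ⟨c, hc, ν, hbi, rfl⟩ |
    ⟨c, hc, ν, hbi, j, rfl⟩ | ⟨c, hc, ν, hbi, j, rfl⟩
  · exact ⟨_, rfl, SofRR_base.mpr ha⟩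
  · exact ⟨_, rfl, SofRR_dom⟩
  · -- triggering rule: head satisfied since r'' ⊨ c
    rcases h'' c hc ν with ⟨a, ha, hm⟩ | ⟨a, ha, hm⟩ | hbi'
    · exact ⟨_, Or.inl ⟨a, ha, rfl⟩, SofRR_primed.mpr hm⟩
    · refine ⟨_, Or.inr ⟨a, ha, rfl⟩, SofRR_nprimed.mpr ⟨?_, hm⟩⟩
      simpa using c.wfneg a ha
    · exact absurd hbi' hbi
  · -- stabilizing rule for a positive literal
    have hj : Lit.neg (GAtom.primed (c.pos.get j).1 ((c.pos.get j).2.map ν)) ∈ SofRR r r'' :=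
      hb (Or.inr rfl)
    have hjout : ((c.pos.get j).1, (c.pos.get j).2.map ν) ∉ r''.atoms :=
      (SofRR_nprimed.mp hj).2
    rcases h'' c hc ν with ⟨a, ha, hm⟩ | ⟨a, ha, hm⟩ | hbi'
    · obtain ⟨i, hi⟩ := List.mem_iff_get.mp ha
      have hij : i ≠ j := by
        rintro rfl
        rw [hi] at hjout
        exact hjout hm
      refine ⟨_, Or.inl ⟨i, hij, rfl⟩, SofRR_primed.mpr ?_⟩
      rw [hi]; exact hm
    · refine ⟨_, Or.inr ⟨a, ha, rfl⟩, SofRR_nprimed.mpr ⟨?_, hm⟩⟩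
      simpa using c.wfneg a ha
    · exact absurd hbi' hbi
  · -- stabilizing rule for a negative literal
    have hj : Lit.pos (GAtom.primed (c.neg.get j).1 ((c.neg.get j).2.map ν)) ∈ SofRR r r'' :=
      hb (Or.inr rfl)
    have hjin : ((c.neg.get j).1, (c.neg.get j).2.map ν) ∈ r''.atoms :=
      SofRR_primed.mp hj
    rcases h'' c hc ν with ⟨a, ha, hm⟩ | ⟨a, ha, hm⟩ | hbi'
    · exact ⟨_, Or.inl ⟨a, ha, rfl⟩, SofRR_primed.mpr hm⟩
    · obtain ⟨i, hi⟩ := List.mem_iff_get.mp ha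
      have hij : i ≠ j := by
        rintro rfl
        rw [hi] at hjin
        exact hm hjin
      refine ⟨_, Or.inr ⟨i, hij, rfl⟩, SofRR_nprimed.mpr ⟨?_, ?_⟩⟩
      · rw [hi]; simpa using c.wfneg a ha
      · rw [hi]; exact hm
    · exact absurd hbi' hbi

private lemma nbody_shape {r : Instance Pred D ar} {IC : Set (BIC Pred D ar)}
    {R : Rule (GAtom Pred D)} (hR : R ∈ changeProg r IC) :
    ∀ L ∈ R.nbody, ∃ p t, L = Lit.pos (GAtom.base p t) := by
  intro L hL
  rcases mem_cp.mp hR with ⟨a, ha, rfl⟩ | ⟨d, rfl⟩ | ⟨c, hc, ν, hbi, rfl⟩ |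
    ⟨c, hc, ν, hbi, j, rfl⟩ | ⟨c, hc, ν, hbi, j, rfl⟩
  · exact absurd hL (Set.notMem_empty L)
  · exact absurd hL (Set.notMem_empty L)
  · obtain ⟨a, ha, rfl⟩ := hL
    exact ⟨_, _, rfl⟩
  · exact absurd hL (Set.notMem_empty L)
  · exact absurd hL (Set.notMem_empty L)

private lemma reduct_congr {r : Instance Pred D ar} {IC : Set (BIC Pred D ar)}
    {S₁ S₂ : Set (Lit (GAtom Pred D))}
    (h : ∀ p t, Lit.pos (GAtom.base p t) ∈ S₁ ↔ Lit.pos (GAtom.base p t) ∈ S₂) :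
    reduct (changeProg r IC) S₁ = reduct (changeProg r IC) S₂ := by
  ext R'
  constructor
  · rintro ⟨R, hR, hn, rfl⟩
    refine ⟨R, hR, ?_, rfl⟩
    intro L hL
    obtain ⟨p, t, rfl⟩ := nbody_shape hR L hL
    rw [← h p t]
    exact hn _ hL
  · rintro ⟨R, hR, hn, rfl⟩
    refine ⟨R, hR, ?_, rfl⟩
    intro L hL
    obtain ⟨p, t, rfl⟩ := nbody_shape hR L hL
    rw [h p t]
    exact hn _ hL

private lemma exists_min_model {α : Type} (P₀ : Program α) (M₀ : Set (Lit α))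
    (hfin : M₀.Finite) (hM : SatProg M₀ P₀) :
    ∃ M, M ⊆ M₀ ∧ SatProg M P₀ ∧ ∀ M' ⊆ M, SatProg M' P₀ → M' = M := by
  have hne : {n | ∃ M, M ⊆ M₀ ∧ SatProg M P₀ ∧ M.ncard = n}.Nonempty :=
    ⟨M₀.ncard, M₀, subset_rfl, hM, rfl⟩
  obtain ⟨M, h1, h2, h3⟩ := Nat.sInf_mem hne
  refine ⟨M, h1, h2, fun M' hsub hsat => ?_⟩
  have hle : sInf {n | ∃ M, M ⊆ M₀ ∧ SatProg M P₀ ∧ M.ncard = n} ≤ M'.ncard :=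
    Nat.sInf_le ⟨M', hsub.trans h1, hsat, rfl⟩
  exact Set.eq_of_subset_of_ncard_le hsub (h3 ▸ hle) (hfin.subset h1)

private lemma exists_answer_set [Finite Pred] [Finite D] {r r'' : Instance Pred D ar}
    {IC : Set (BIC Pred D ar)} (h'' : SatIC r'' IC) :
    ∃ S'', AnswerSet S'' (changeProg r IC) ∧
      (weakViol ar S'').ncard ≤ (symmDiff r.atoms r''.atoms).ncard := by
  obtain ⟨M, hsub, hsatM, hminM⟩ := exists_min_model (reduct (changeProg r IC) (SofRR r r''))
    (SofRR r r'') SofRR_finite (SofRR_model h'')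
  have hbM : ∀ p t, Lit.pos (GAtom.base p t) ∈ M ↔ Lit.pos (GAtom.base p t) ∈ SofRR r r'' := by
    intro p t
    constructor
    · exact fun h => hsub h
    · intro h
      exact base_of_r' hsatM (SofRR_base.mp h)
  have hred : reduct (changeProg r IC) M = reduct (changeProg r IC) (SofRR r r'') :=
    reduct_congr hbM
  have hAS : AnswerSet M (changeProg r IC) := by
    refine ⟨fun x hx => SofRR_coherent x ⟨hsub hx.1, hsub hx.2⟩, ?_, ?_⟩
    · rw [hred]; exact hsatM
    · intro S' h1 h2
      rw [hred] at h2
      exact hminM S' h1 h2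
  refine ⟨M, hAS, ?_⟩
  have hinj : Set.InjOn Prod.snd (weakViol ar M) := by
    rintro ⟨b, a⟩ hx ⟨b', a'⟩ hy (h : a = a')
    subst h
    rcases hx.2 with ⟨hb, hp, hbase⟩ | ⟨hb, hp, hbase⟩ <;>
      rcases hy.2 with ⟨hb', hp', hbase'⟩ | ⟨hb', hp', hbase'⟩
    · simp only [Prod.mk.injEq]
      exact ⟨hb.trans hb'.symm, trivial⟩
    · exact absurd hbase' hbase
    · exact absurd hbase hbase'
    · simp only [Prod.mk.injEq]
      exact ⟨hb.trans hb'.symm, trivial⟩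
  have himg : Prod.snd '' weakViol ar M ⊆ symmDiff r.atoms r''.atoms := by
    rintro a ⟨⟨b, a'⟩, hv, rfl⟩
    rcases hv.2 with ⟨hb, hp, hbase⟩ | ⟨hb, hp, hbase⟩
    · rw [Set.mem_symmDiff]
      right
      refine ⟨SofRR_primed.mp (hsub hp), fun har => hbase (base_of_r' hsatM har)⟩
    · rw [Set.mem_symmDiff]
      left
      exact ⟨SofRR_base.mp (hsub hbase), (SofRR_nprimed.mp (hsub hp)).2⟩
  calc (weakViol ar M).ncard = (Prod.snd '' weakViol ar M).ncard :=
        (Set.ncard_image_of_injOn hinj).symm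
    _ ≤ (symmDiff r.atoms r''.atoms).ncard := by
        refine Set.ncard_le_ncard himg ?_
        rw [Set.symmDiff_def]
        exact (r.finite.diff).union (r''.finite.diff)

end Proof10

/-- Theorem `td`, part 2. Let `r` be a database instance
over a finite domain `D` and `IC` a set of binary integrity constraints. For
every answer set `S` of the program `Π^D(r)`, the instance `I(S)` is a Dalal
repair of `r` wrt `IC`. -/
theorem statement10 {Pred D : Type} [Finite Pred] [Finite D] {ar : Pred → ℕ}
    (r : Instance Pred D ar) (IC : Set (BIC Pred D ar))
    (S : Set (Lit (GAtom Pred D))) (hS : DalalAnswerSet r IC S) :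
    ∃ r' : Instance Pred D ar, r'.atoms = IofS S ∧ IsDalalRepair r r' IC := by
  obtain ⟨hA, hminW⟩ := hS
  have hgood := good_of_S hA
  have hcoh := hA.1
  have hsat := hA.2.1
  have hbS : ∀ p t, Lit.pos (GAtom.base p t) ∈ S ↔ (p, t) ∈ r.atoms := by
    intro p t
    exact ⟨fun h => hgood _ h, fun h => base_of_r' hsat h⟩
  have hwf : ∀ a ∈ IofS S, a.2.length = ar a.1 := by
    rintro a (h | ⟨h, -⟩)
    · exact hgood _ h
    · exact r.wf a ((hbS a.1 a.2).mp h)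
  have hfin : (IofS S).Finite := finite_wf.subset (fun a ha => hwf a ha)
  refine ⟨⟨IofS S, hfin, hwf⟩, rfl, IofS_sat hA, ?_⟩
  intro r'' h''
  obtain ⟨S'', hAS'', hW''⟩ := exists_answer_set (r := r) h''
  have hinj : Set.InjOn Prod.snd (weakViol ar S) := by
    rintro ⟨b, a⟩ hx ⟨b', a'⟩ hy (h : a = a')
    subst h
    rcases hx.2 with ⟨hb, hp, hbase⟩ | ⟨hb, hp, hbase⟩ <;>
      rcases hy.2 with ⟨hb', hp', hbase'⟩ | ⟨hb', hp', hbase'⟩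
    · simp only [Prod.mk.injEq]
      exact ⟨hb.trans hb'.symm, trivial⟩
    · exact absurd hbase' hbase
    · exact absurd hbase hbase'
    · simp only [Prod.mk.injEq]
      exact ⟨hb.trans hb'.symm, trivial⟩
  have himg : Prod.snd '' weakViol ar S = symmDiff r.atoms (IofS S) := by
    ext a
    constructor
    · rintro ⟨⟨b, a'⟩, hv, rfl⟩
      rcases hv.2 with ⟨hb, hp, hbase⟩ | ⟨hb, hp, hbase⟩
      · rw [Set.mem_symmDiff]
        right
        exact ⟨Or.inl hp, fun har => hbase ((hbS _ _).mpr har)⟩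
      · rw [Set.mem_symmDiff]
        left
        refine ⟨(hbS _ _).mp hbase, ?_⟩
        rintro (h | ⟨h1, h2⟩)
        · exact hcoh _ ⟨h, hp⟩
        · exact h2 hp
    · intro ha
      rw [Set.mem_symmDiff] at ha
      rcases ha with ⟨har, hnis⟩ | ⟨his, hnr⟩
      · have hbase : Lit.pos (GAtom.base a.1 a.2) ∈ S := (hbS _ _).mpr har
        have hnp : Lit.neg (GAtom.primed a.1 a.2) ∈ S := by
          by_contra h
          exact hnis (Or.inr ⟨hbase, h⟩)
        exact ⟨(false, a), ⟨r.wf a har, Or.inr ⟨rfl, hnp, hbase⟩⟩, rfl⟩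
      · have hp : Lit.pos (GAtom.primed a.1 a.2) ∈ S := by
          rcases his with h | ⟨h1, h2⟩
          · exact h
          · exact absurd ((hbS _ _).mp h1) hnr
        have hbase : Lit.pos (GAtom.base a.1 a.2) ∉ S := fun h => hnr ((hbS _ _).mp h)
        exact ⟨(true, a), ⟨hgood _ hp, Or.inl ⟨rfl, hp, hbase⟩⟩, rfl⟩
  calc (symmDiff r.atoms (IofS S)).ncard
      = (weakViol ar S).ncard := by rw [← himg, Set.ncard_image_of_injOn hinj]
    _ ≤ (weakViol ar S'').ncard := hminW S'' hAS''
    _ ≤ (symmDiff r.atoms r''.atoms).ncard := hW''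

end CQA
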